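/- arXiv:2007.15041 — 3 statements merged into one kernel-verified Lean document; each statement's English description precedes it below -/
import Mathlib

section
/- The function h(t,x) = x + ∫_{e^x}^∞ (1/r) e^{-r²/(2t)} dr satisfies the PDE h_t = (1/2) e^{-2x} h_xx for all t > 0 and x ∈ ℝ. -/
set_option maxHeartbeats 1000000

open MeasureTheory

/-- Value function of the inverse 2D Bessel process:
`h(t,x) = x + ∫_{e^x}^∞ (1/r) e^{-r²/(2t)} dr`. -/
noncomputable def invBessel2Dh (t x : ℝ) : ℝ :=
  x + ∫ r in Set.Ioi (Real.exp x), r⁻¹ * Real.exp (-r ^ 2 / (2 * t))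

lemma ftc_Ioi (f : ℝ → ℝ) (c : ℝ) (hc : 0 < c)
    (hf : ContinuousOn f (Set.Ioi 0))
    (hint : IntegrableOn f (Set.Ioi c))
    (a : ℝ) (ha : c < a) :
    HasDerivAt (fun b => ∫ r in Set.Ioi b, f r) (-f a) a := by
  have key : ∀ b ∈ Set.Ioi c, (∫ r in Set.Ioi b, f r)
      = (∫ r in Set.Ioi c, f r) - ∫ r in c..b, f r := by
    intro b hb
    rw [intervalIntegral.integral_of_le (le_of_lt hb)]
    have hs : Set.Ioi c = Set.Ioc c b ∪ Set.Ioi b := (Set.Ioc_union_Ioi_eq_Ioi (le_of_lt hb)).symm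
    rw [hs, setIntegral_union (Set.Ioc_disjoint_Ioi le_rfl) measurableSet_Ioi
      (hint.mono_set (by rw [hs]; exact Set.subset_union_left))
      (hint.mono_set (by rw [hs]; exact Set.subset_union_right))]
    ring
  have hca : ContinuousAt f a := hf.continuousAt (Ioi_mem_nhds (hc.trans ha))
  have h2 : HasDerivAt (fun b => (∫ r in Set.Ioi c, f r) - ∫ r in c..b, f r) (-f a) a := by
    have := intervalIntegral.integral_hasDerivAt_right
      (f := f) (a := c) (b := a)
      (by rw [intervalIntegrable_iff_integrableOn_Ioc_of_le (le_of_lt ha)]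
          exact hint.mono_set Set.Ioc_subset_Ioi_self)
      (ContinuousAt.stronglyMeasurableAtFilter isOpen_Ioi
        (fun y hy => hf.continuousAt (Ioi_mem_nhds hy)) a (hc.trans ha))
      hca
    simpa using (this.const_sub (∫ r in Set.Ioi c, f r))
  exact h2.congr_of_eventuallyEq <|
    Filter.eventuallyEq_of_mem (Ioi_mem_nhds ha) key

lemma contOn_f (t : ℝ) : ContinuousOn (fun r : ℝ => r⁻¹ * Real.exp (-r ^ 2 / (2 * t)))
    (Set.Ioi 0) := by
  intro r hr
  exact ((continuousAt_inv₀ (ne_of_gt hr)).mul (by fun_prop)).continuousWithinAt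

lemma integrableOn_f (t c : ℝ) (ht : 0 < t) (hc : 0 < c) :
    IntegrableOn (fun r : ℝ => r⁻¹ * Real.exp (-r ^ 2 / (2 * t))) (Set.Ioi c) := by
  have hb : (0:ℝ) < 1 / (2 * t) := by positivity
  refine Integrable.mono' (((integrable_exp_neg_mul_sq hb).const_mul c⁻¹).restrict)
    ?_ ?_
  · exact ((measurable_inv.mul (by measurability)).aestronglyMeasurable)
  · filter_upwards [ae_restrict_mem measurableSet_Ioi] with r hr
    have hr0 : (0:ℝ) < r := hc.trans hr
    rw [Real.norm_eq_abs, abs_of_nonneg (by positivity)]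
    have h1 : r⁻¹ ≤ c⁻¹ := by
      exact inv_anti₀ hc (le_of_lt hr)
    have h2 : Real.exp (-r ^ 2 / (2 * t)) = Real.exp (-(1 / (2 * t)) * r ^ 2) := by
      ring_nf
    rw [h2]
    exact mul_le_mul_of_nonneg_right h1 (le_of_lt (Real.exp_pos _))


lemma integral_Fprime (a t : ℝ) (ha : 0 < a) (ht : 0 < t) :
    ∫ r in Set.Ioi a, r⁻¹ * Real.exp (-r ^ 2 / (2 * t)) * (r ^ 2 / (2 * t ^ 2))
      = (2 * t)⁻¹ * Real.exp (-a ^ 2 / (2 * t)) := by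
  have hb : (0:ℝ) < 1 / (2 * t) := by positivity
  have key := integral_Ioi_of_hasDerivAt_of_tendsto
    (f := fun r : ℝ => -(2 * t)⁻¹ * Real.exp (-r ^ 2 / (2 * t)))
    (f' := fun r : ℝ => r⁻¹ * Real.exp (-r ^ 2 / (2 * t)) * (r ^ 2 / (2 * t ^ 2)))
    (a := a) (m := 0)
    ((Continuous.continuousWithinAt (by fun_prop)))
    (fun r hr => by
      have hr0 : (0:ℝ) < r := ha.trans hr
      have h1 : HasDerivAt (fun r : ℝ => -r ^ 2 / (2 * t)) (-(2 * r ^ 1) / (2 * t)) r :=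
        ((hasDerivAt_pow 2 r).neg).div_const (2 * t)
      have h2 := (h1.exp).const_mul (-(2 * t)⁻¹)
      refine h2.congr_deriv ?_
      field_simp)
    (by
      refine Integrable.mono'
        (((integrable_mul_exp_neg_mul_sq hb).const_mul ((2 * t ^ 2)⁻¹)).restrict) ?_ ?_
      · exact ((measurable_inv.mul (by measurability)).mul (by measurability)).aestronglyMeasurable
      · filter_upwards [ae_restrict_mem measurableSet_Ioi] with r hr
        have hr0 : (0:ℝ) < r := ha.trans hr
        rw [Real.norm_eq_abs, abs_of_nonneg (by positivity)]
        have h2 : Real.exp (-r ^ 2 / (2 * t)) = Real.exp (-(1 / (2 * t)) * r ^ 2) := by ring_nf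
        rw [h2]
        rw [show r⁻¹ * Real.exp (-(1 / (2 * t)) * r ^ 2) * (r ^ 2 / (2 * t ^ 2))
            = (2 * t ^ 2)⁻¹ * (r * Real.exp (-(1 / (2 * t)) * r ^ 2)) from by
          field_simp])
    (by
      have h1 : Filter.Tendsto (fun r : ℝ => -r ^ 2 / (2 * t)) Filter.atTop Filter.atBot := by
        have h2 : Filter.Tendsto (fun r : ℝ => r ^ 2 / (2 * t)) Filter.atTop Filter.atTop :=
          (Filter.tendsto_pow_atTop two_ne_zero).atTop_div_const (by positivity)
        have := Filter.tendsto_neg_atTop_atBot.comp h2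
        exact this.congr fun r => by simp [Function.comp, neg_div]
      have h3 := (Real.tendsto_exp_atBot.comp h1).const_mul (-(2 * t)⁻¹)
      simpa using h3)
  rw [key]
  simp


lemma hasDerivAt_t (a t : ℝ) (ha : 0 < a) (ht : 0 < t) :
    HasDerivAt (fun s : ℝ => ∫ r in Set.Ioi a, r⁻¹ * Real.exp (-r ^ 2 / (2 * s)))
      ((2 * t)⁻¹ * Real.exp (-a ^ 2 / (2 * t))) t := by
  have hb3 : (0:ℝ) < 1 / (3 * t) := by positivity
  have key := hasDerivAt_integral_of_dominated_loc_of_deriv_le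
    (μ := volume.restrict (Set.Ioi a))
    (F := fun s r => r⁻¹ * Real.exp (-r ^ 2 / (2 * s)))
    (F' := fun s r => r⁻¹ * Real.exp (-r ^ 2 / (2 * s)) * (r ^ 2 / (2 * s ^ 2)))
    (x₀ := t) (s := Metric.ball t (t / 2))
    (bound := fun r => (2 / t ^ 2) * (r * Real.exp (-(1 / (3 * t)) * r ^ 2)))
    (Metric.ball_mem_nhds t (by positivity))
    (Filter.Eventually.of_forall fun s =>
      ((measurable_inv.mul (by measurability)).aestronglyMeasurable))
    (integrableOn_f t a ht ha)
    (((measurable_inv.mul (by measurability)).mul (by measurability)).aestronglyMeasurable)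
    ?_ ?_ ?_
  · have h := key.2
    rwa [integral_Fprime a t ha ht] at h
  · -- bound
    filter_upwards [ae_restrict_mem measurableSet_Ioi] with r hr s hs
    have hr0 : (0:ℝ) < r := ha.trans hr
    rw [Metric.mem_ball, Real.dist_eq, abs_lt] at hs
    have hs1 : t / 2 < s := by linarith
    have hs2 : s < 3 * t / 2 := by linarith
    have hs0 : (0:ℝ) < s := lt_trans (by positivity) hs1
    simp only [Real.norm_eq_abs]
    rw [abs_of_nonneg (by positivity)]
    have hexp : Real.exp (-r ^ 2 / (2 * s)) ≤ Real.exp (-(1 / (3 * t)) * r ^ 2) := by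
      apply Real.exp_le_exp.2
      rw [show -(1 / (3 * t)) * r ^ 2 = -r ^ 2 / (3 * t) by ring,
        div_le_div_iff₀ (by positivity) (by positivity)]
      nlinarith [sq_nonneg r]
    have h1 : r⁻¹ * Real.exp (-r ^ 2 / (2 * s)) * (r ^ 2 / (2 * s ^ 2))
        = (r * Real.exp (-r ^ 2 / (2 * s))) * (2 * s ^ 2)⁻¹ := by
      field_simp
    rw [h1]
    have h2 : (2 * s ^ 2)⁻¹ ≤ 2 / t ^ 2 := by
      rw [inv_le_iff_one_le_mul₀ (by positivity),
        show (2:ℝ) / t ^ 2 * (2 * s ^ 2) = 4 * s ^ 2 / t ^ 2 by ring,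
        le_div_iff₀ (by positivity)]
      have hss := mul_le_mul hs1.le hs1.le (by positivity) hs0.le
      nlinarith
    calc r * Real.exp (-r ^ 2 / (2 * s)) * (2 * s ^ 2)⁻¹
        ≤ r * Real.exp (-(1 / (3 * t)) * r ^ 2) * (2 / t ^ 2) := by
          apply mul_le_mul (mul_le_mul_of_nonneg_left hexp (le_of_lt hr0)) h2
            (by positivity) (by positivity)
      _ = 2 / t ^ 2 * (r * Real.exp (-(1 / (3 * t)) * r ^ 2)) := by ring
  · -- bound integrable
    exact (((integrable_mul_exp_neg_mul_sq hb3).const_mul (2 / t ^ 2)).restrict)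
  · -- differentiability
    filter_upwards [ae_restrict_mem measurableSet_Ioi] with r hr s hs
    have hr0 : (0:ℝ) < r := ha.trans hr
    rw [Metric.mem_ball, Real.dist_eq, abs_lt] at hs
    have hs0 : (0:ℝ) < s := by linarith [hs.1]
    have hfun : (fun s : ℝ => -r ^ 2 / (2 * s)) = fun s => (-r ^ 2 / 2) * s⁻¹ := by
      funext u; ring
    have h1 : HasDerivAt (fun s : ℝ => -r ^ 2 / (2 * s)) ((-r ^ 2 / 2) * (-(s ^ 2)⁻¹)) s := by
      rw [hfun]
      exact (hasDerivAt_inv (ne_of_gt hs0)).const_mul (-r ^ 2 / 2)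
    have h2 := (h1.exp).const_mul r⁻¹
    refine h2.congr_deriv ?_
    field_simp

lemma hasDerivAt_x_invB (t : ℝ) (ht : 0 < t) (y : ℝ) :
    HasDerivAt (fun y => invBessel2Dh t y)
      (1 - Real.exp (-Real.exp y ^ 2 / (2 * t))) y := by
  have hey : (0:ℝ) < Real.exp y := Real.exp_pos y
  have hJ := ftc_Ioi (fun r : ℝ => r⁻¹ * Real.exp (-r ^ 2 / (2 * t)))
    (Real.exp y / 2) (by positivity) (contOn_f t)
    (integrableOn_f t (Real.exp y / 2) ht (by positivity))
    (Real.exp y) (by linarith)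
  have hcomp := hJ.comp y (Real.hasDerivAt_exp y)
  have h := (hasDerivAt_id y).add hcomp
  have heq : (fun y => invBessel2Dh t y)
      = fun y => y + ((fun b => ∫ r in Set.Ioi b, r⁻¹ * Real.exp (-r ^ 2 / (2 * t)))
        ∘ Real.exp) y := by
    funext z; simp [invBessel2Dh, Function.comp]
  rw [heq]
  refine h.congr_deriv ?_
  field_simp
  ring

lemma deriv2_invB (t x : ℝ) (ht : 0 < t) :
    deriv (deriv (fun y => invBessel2Dh t y)) x
      = Real.exp x ^ 2 / t * Real.exp (-Real.exp x ^ 2 / (2 * t)) := by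
  have hd : deriv (fun y => invBessel2Dh t y)
      = fun y => 1 - Real.exp (-Real.exp y ^ 2 / (2 * t)) :=
    funext fun y => (hasDerivAt_x_invB t ht y).deriv
  rw [hd]
  have h1 : HasDerivAt (fun y : ℝ => -Real.exp y ^ 2 / (2 * t))
      (-(2 * Real.exp x ^ 1 * Real.exp x) / (2 * t)) x :=
    (((Real.hasDerivAt_exp x).pow 2).neg).div_const (2 * t)
  have h2 := (h1.exp).const_sub 1
  rw [h2.deriv]
  field_simp

/-- `h` satisfies the Cauchy PDE `h_t = (1/2) e^{-2x} h_xx` for all `t > 0`, `x ∈ ℝ`. -/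
theorem invBessel2Dh_pde (t x : ℝ) (ht : 0 < t) :
    deriv (fun s => invBessel2Dh s x) t
      = (1 / 2) * Real.exp (-2 * x) * iteratedDeriv 2 (fun y => invBessel2Dh t y) x := by
  have hex : (0:ℝ) < Real.exp x := Real.exp_pos x
  have hL : deriv (fun s => invBessel2Dh s x) t
      = (2 * t)⁻¹ * Real.exp (-Real.exp x ^ 2 / (2 * t)) := by
    have h := (hasDerivAt_t (Real.exp x) t hex ht).const_add x
    have heq : (fun s => invBessel2Dh s x)
        = fun s => x + ∫ r in Set.Ioi (Real.exp x), r⁻¹ * Real.exp (-r ^ 2 / (2 * s)) := by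
      funext s; simp [invBessel2Dh]
    rw [heq]
    exact h.deriv
  rw [hL, iteratedDeriv_succ, iteratedDeriv_one, deriv2_invB t x ht]
  have hx2 : Real.exp (-2 * x) * Real.exp x ^ 2 = 1 := by
    rw [sq, ← Real.exp_add, ← Real.exp_add, show -2 * x + (x + x) = 0 by ring, Real.exp_zero]
  calc (2 * t)⁻¹ * Real.exp (-Real.exp x ^ 2 / (2 * t))
      = (1 * ((2 * t)⁻¹ * Real.exp (-Real.exp x ^ 2 / (2 * t)))) := by ring
    _ = ((Real.exp (-2 * x) * Real.exp x ^ 2)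
        * ((2 * t)⁻¹ * Real.exp (-Real.exp x ^ 2 / (2 * t)))) := by rw [hx2]
    _ = 1 / 2 * Real.exp (-2 * x)
        * (Real.exp x ^ 2 / t * Real.exp (-Real.exp x ^ 2 / (2 * t))) := by ring
end

section
/- For each fixed t > 0, lim_{x → -∞} ( x + ∫_{e^x}^∞ (1/r) e^{-r²/(2t)} dr ) = (1/2)(log 2 + log t − γ), where γ is the Euler–Mascheroni constant. -/
set_option maxHeartbeats 1000000

open MeasureTheory Filter Set Real

namespace InvBessel

lemma integral_log_mul_exp_neg : ∫ u in Ioi (0:ℝ), Real.log u * Real.exp (-u) = -Real.eulerMascheroniConstant := by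
  have h1 := Complex.hasDerivAt_GammaIntegral (s := 1) (by norm_num)
  have hmem : {s : ℂ | 0 < s.re} ∈ nhds (1 : ℂ) := by
    refine (isOpen_lt continuous_const Complex.continuous_re).mem_nhds (by norm_num)
  have heq : Complex.Gamma =ᶠ[nhds (1:ℂ)] Complex.GammaIntegral :=
    Filter.eventuallyEq_of_mem hmem fun s hs => Complex.Gamma_eq_integral hs
  have h2 : HasDerivAt Complex.Gamma
      (∫ t : ℝ in Ioi 0, (t:ℂ) ^ ((1:ℂ) - 1) * (Real.log t * Real.exp (-t))) 1 :=
    h1.congr_of_eventuallyEq heq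
  have h2' : HasDerivAt Complex.Gamma
      (∫ t : ℝ in Ioi 0, (t:ℂ) ^ ((1:ℂ) - 1) * (Real.log t * Real.exp (-t))) ((1:ℝ):ℂ) := by
    simpa using h2
  have h3 := h2'.real_of_complex
  have h4 : (fun x : ℝ => (Complex.Gamma (x:ℂ)).re) = Real.Gamma := by
    funext x; rw [Complex.Gamma_ofReal, Complex.ofReal_re]
  rw [h4] at h3
  have h5 := h3.unique Real.hasDerivAt_Gamma_one
  rw [← h5]
  have h6 : (∫ t : ℝ in Ioi 0, (t:ℂ) ^ ((1:ℂ) - 1) * (Real.log t * Real.exp (-t)))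
      = ((∫ t : ℝ in Ioi 0, Real.log t * Real.exp (-t) : ℝ) : ℂ) := by
    rw [show (∫ t : ℝ in Ioi 0, (t:ℂ) ^ ((1:ℂ) - 1) * (Real.log t * Real.exp (-t)))
        = ∫ t : ℝ in Ioi 0, ((Real.log t * Real.exp (-t) : ℝ) : ℂ) from
      setIntegral_congr_fun measurableSet_Ioi fun x hx => by
        simp [Complex.cpow_zero]]
    exact integral_ofReal
  rw [h6, Complex.ofReal_re]

lemma abs_log_le (u : ℝ) (hu : 0 < u) : |Real.log u| ≤ 2 * u ^ (-(1/2) : ℝ) + u := by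
  rcases le_or_gt u 1 with h | h
  · rw [abs_of_nonpos (Real.log_nonpos hu.le h)]
    have h1 : Real.log u⁻¹ ≤ u⁻¹ ^ ((1/2):ℝ) / (1/2) :=
      Real.log_le_rpow_div (by positivity) (by norm_num)
    have h2 : u⁻¹ ^ ((1/2):ℝ) = u ^ (-(1/2):ℝ) := by
      rw [← Real.rpow_neg_one u, ← Real.rpow_mul hu.le]; norm_num
    rw [Real.log_inv, h2] at h1
    nlinarith [Real.rpow_nonneg hu.le (-(1/2):ℝ)]
  · rw [abs_of_nonneg (Real.log_nonneg h.le)]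
    have := Real.log_le_sub_one_of_pos hu
    have : (0:ℝ) ≤ 2 * u ^ (-(1/2):ℝ) := by positivity
    linarith [Real.log_le_sub_one_of_pos hu]

lemma integrableOn_log_mul_exp_neg :
    IntegrableOn (fun u => Real.log u * Real.exp (-u)) (Ioi (0:ℝ)) := by
  have hbd : IntegrableOn
      (fun u : ℝ => 2 * (Real.exp (-u) * u ^ ((1/2:ℝ) - 1)) + Real.exp (-u) * u ^ ((2:ℝ) - 1))
      (Ioi 0) :=
    ((Real.GammaIntegral_convergent (by norm_num : (0:ℝ) < 1/2)).const_mul 2).add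
      (Real.GammaIntegral_convergent (by norm_num : (0:ℝ) < 2))
  refine Integrable.mono' hbd ?_ ?_
  · refine ContinuousOn.aestronglyMeasurable ?_ measurableSet_Ioi
    exact (Real.continuousOn_log.mono fun x hx => ne_of_gt hx).mul
      (Real.continuous_exp.comp continuous_neg).continuousOn
  · refine (ae_restrict_iff' measurableSet_Ioi).mpr (ae_of_all _ fun u hu => ?_)
    have hu : (0:ℝ) < u := hu
    have h1 := abs_log_le u hu
    have he : 0 < Real.exp (-u) := Real.exp_pos _
    have h2 : u ^ ((1/2:ℝ) - 1) = u ^ (-(1/2):ℝ) := by norm_num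
    have h3 : u ^ ((2:ℝ) - 1) = u := by
      rw [show ((2:ℝ) - 1) = (1:ℝ) by norm_num, Real.rpow_one]
    rw [norm_mul, Real.norm_eq_abs, Real.norm_eq_abs, abs_of_pos he, h2, h3]
    nlinarith [Real.rpow_nonneg hu.le (-(1/2):ℝ)]

lemma r_mul_abs_log_le (r : ℝ) (hr : 0 < r) : r * |Real.log r| ≤ 1 + r ^ 2 := by
  rcases le_or_gt r 1 with h | h
  · rw [abs_of_nonpos (Real.log_nonpos hr.le h)]
    have h1 : Real.log r⁻¹ ≤ r⁻¹ - 1 := Real.log_le_sub_one_of_pos (by positivity)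
    rw [Real.log_inv] at h1
    have h2 : r * -Real.log r ≤ r * (r⁻¹ - 1) := by
      apply mul_le_mul_of_nonneg_left _ hr.le
      linarith
    have h3 : r * (r⁻¹ - 1) = 1 - r := by field_simp
    nlinarith
  · rw [abs_of_nonneg (Real.log_nonneg h.le)]
    have h1 : Real.log r ≤ r - 1 := Real.log_le_sub_one_of_pos hr
    nlinarith

lemma integrableOn_h (t : ℝ) (ht : 0 < t) :
    IntegrableOn (fun r => r * Real.log r * Real.exp (-r ^ 2 / (2 * t))) (Ioi (0:ℝ)) := by
  have hb : (0:ℝ) < (2*t)⁻¹ := by positivity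
  have hbd : IntegrableOn
      (fun r : ℝ => Real.exp (-(2*t)⁻¹ * r ^ 2) + r ^ (2:ℝ) * Real.exp (-(2*t)⁻¹ * r ^ 2))
      (Ioi 0) :=
    (((integrable_exp_neg_mul_sq hb).add
      (integrable_rpow_mul_exp_neg_mul_sq hb (by norm_num : (-1:ℝ) < 2))).integrableOn)
  refine Integrable.mono' hbd ?_ ?_
  · refine ContinuousOn.aestronglyMeasurable ?_ measurableSet_Ioi
    exact (continuousOn_id.mul (Real.continuousOn_log.mono fun x hx => ne_of_gt hx)).mul
      (Real.continuous_exp.comp (by continuity)).continuousOn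
  · refine (ae_restrict_iff' measurableSet_Ioi).mpr (ae_of_all _ fun r hr => ?_)
    have hr : (0:ℝ) < r := hr
    have he : Real.exp (-r ^ 2 / (2 * t)) = Real.exp (-(2*t)⁻¹ * r ^ 2) := by
      congr 1; field_simp
    have hp : r ^ (2:ℝ) = r ^ 2 := by
      rw [show (2:ℝ) = ((2:ℕ):ℝ) by norm_num, Real.rpow_natCast]
    rw [norm_mul, Real.norm_eq_abs, Real.norm_eq_abs, abs_mul, abs_of_pos hr,
      abs_of_pos (Real.exp_pos _), he, hp]
    have h1 := r_mul_abs_log_le r hr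
    have h2 : (0:ℝ) < Real.exp (-(2*t)⁻¹ * r ^ 2) := Real.exp_pos _
    nlinarith

lemma integrableOn_g (t a : ℝ) (ht : 0 < t) (ha : 0 < a) :
    IntegrableOn (fun r => r⁻¹ * Real.exp (-r ^ 2 / (2 * t))) (Ioi a) := by
  have hb : (0:ℝ) < (2*t)⁻¹ := by positivity
  have hbd : IntegrableOn (fun r : ℝ => a⁻¹ * Real.exp (-(2*t)⁻¹ * r ^ 2)) (Ioi a) :=
    ((integrable_exp_neg_mul_sq hb).const_mul a⁻¹).integrableOn
  refine Integrable.mono' hbd ?_ ?_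
  · refine ContinuousOn.aestronglyMeasurable ?_ measurableSet_Ioi
    exact ((continuousOn_inv₀.mono fun x hx => ne_of_gt (ha.trans hx)).mul
      (Real.continuous_exp.comp (by continuity)).continuousOn)
  · refine (ae_restrict_iff' measurableSet_Ioi).mpr (ae_of_all _ fun r hr => ?_)
    have hr : a < r := hr
    have hr0 : (0:ℝ) < r := ha.trans hr
    have he : Real.exp (-r ^ 2 / (2 * t)) = Real.exp (-(2*t)⁻¹ * r ^ 2) := by
      congr 1; field_simp
    rw [norm_mul, Real.norm_eq_abs, Real.norm_eq_abs, abs_of_pos (Real.exp_pos _),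
      abs_of_pos (inv_pos.mpr hr0), he]
    have : r⁻¹ ≤ a⁻¹ := by
      apply inv_anti₀ ha hr.le
    nlinarith [Real.exp_pos (-(2*t)⁻¹ * r ^ 2)]

lemma tendsto_F_atTop (t : ℝ) (ht : 0 < t) :
    Tendsto (fun r => Real.log r * Real.exp (-r ^ 2 / (2 * t))) atTop (nhds 0) := by
  have hc : (0:ℝ) < (2*t)⁻¹ := by positivity
  have key : Tendsto (fun r : ℝ => ((2*t)⁻¹)⁻¹ * (((2*t)⁻¹ * r) ^ 1 * Real.exp (-((2*t)⁻¹ * r))))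
      atTop (nhds (((2*t)⁻¹)⁻¹ * 0)) := by
    exact Tendsto.const_mul _ ((tendsto_pow_mul_exp_neg_atTop_nhds_zero 1).comp
      (tendsto_id.const_mul_atTop hc))
  rw [mul_zero] at key
  refine squeeze_zero_norm' ?_ key
  filter_upwards [eventually_ge_atTop (1:ℝ)] with r hr
  have hr0 : (0:ℝ) < r := lt_of_lt_of_le one_pos hr
  have h1 : |Real.log r| ≤ r := by
    rw [abs_of_nonneg (Real.log_nonneg hr)]
    linarith [Real.log_le_sub_one_of_pos hr0]
  have h2 : Real.exp (-r ^ 2 / (2 * t)) ≤ Real.exp (-((2*t)⁻¹ * r)) := by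
    apply Real.exp_le_exp.mpr
    rw [div_eq_mul_inv, neg_mul]
    have h3 : r ≤ r ^ 2 := by nlinarith
    have h2t : (0:ℝ) < 2 * t := by positivity
    nlinarith [inv_pos.mpr h2t]
  calc ‖Real.log r * Real.exp (-r ^ 2 / (2 * t))‖
      = |Real.log r| * Real.exp (-r ^ 2 / (2 * t)) := by
        rw [norm_mul, Real.norm_eq_abs, Real.norm_eq_abs, abs_of_pos (Real.exp_pos _)]
    _ ≤ r * Real.exp (-((2*t)⁻¹ * r)) := by
        apply mul_le_mul h1 h2 (le_of_lt (Real.exp_pos _)) hr0.le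
    _ = ((2*t)⁻¹)⁻¹ * (((2*t)⁻¹ * r) ^ 1 * Real.exp (-((2*t)⁻¹ * r))) := by
        field_simp

lemma ibp (t a : ℝ) (ht : 0 < t) (ha : 0 < a) :
    ∫ r in Ioi a, r⁻¹ * Real.exp (-r ^ 2 / (2 * t)) =
      t⁻¹ * (∫ r in Ioi a, r * Real.log r * Real.exp (-r ^ 2 / (2 * t)))
        - Real.log a * Real.exp (-a ^ 2 / (2 * t)) := by
  set F : ℝ → ℝ := fun r => Real.log r * Real.exp (-r ^ 2 / (2 * t)) with hF
  have hderiv : ∀ r ∈ Ioi a, HasDerivAt F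
      (r⁻¹ * Real.exp (-r ^ 2 / (2 * t))
        + (-t⁻¹) * (r * Real.log r * Real.exp (-r ^ 2 / (2 * t)))) r := by
    intro r hr
    have hr0 : (0:ℝ) < r := ha.trans hr
    have d1 : HasDerivAt (fun r : ℝ => -r ^ 2 / (2 * t)) (-(2 * r ^ 1) / (2 * t)) r :=
      ((hasDerivAt_pow 2 r).neg).div_const (2 * t)
    have d2 : HasDerivAt (fun r : ℝ => Real.exp (-r ^ 2 / (2 * t)))
        (Real.exp (-r ^ 2 / (2 * t)) * (-(2 * r ^ 1) / (2 * t))) r := d1.exp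
    have d3 : HasDerivAt F (r⁻¹ * Real.exp (-r ^ 2 / (2 * t))
        + Real.log r * (Real.exp (-r ^ 2 / (2 * t)) * (-(2 * r ^ 1) / (2 * t)))) r :=
      (Real.hasDerivAt_log hr0.ne').mul d2
    convert d3 using 1
    have h2t : (2 : ℝ) * t ≠ 0 := by positivity
    ring
  have hg := InvBessel.integrableOn_g t a ht ha
  have hh : IntegrableOn (fun r => (-t⁻¹) * (r * Real.log r * Real.exp (-r ^ 2 / (2 * t)))) (Ioi a) :=
    ((InvBessel.integrableOn_h t ht).mono_set (Ioi_subset_Ioi ha.le)).const_mul _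
  have hint : IntegrableOn (fun r => r⁻¹ * Real.exp (-r ^ 2 / (2 * t))
        + (-t⁻¹) * (r * Real.log r * Real.exp (-r ^ 2 / (2 * t)))) (Ioi a) := hg.add hh
  have hcont : ContinuousWithinAt F (Ici a) a := by
    apply ContinuousAt.continuousWithinAt
    exact (Real.continuousAt_log ha.ne').mul (Real.continuous_exp.comp (by continuity)).continuousAt
  have key := integral_Ioi_of_hasDerivAt_of_tendsto hcont hderiv hint (tendsto_F_atTop t ht)
  rw [integral_add hg hh] at key
  rw [integral_const_mul] at key
  have hFa : F a = Real.log a * Real.exp (-a ^ 2 / (2 * t)) := rfl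
  rw [hFa] at key
  linarith [key]

lemma tendsto_tail (t : ℝ) (ht : 0 < t) :
    Tendsto (fun x : ℝ => ∫ r in Ioi (Real.exp x), r * Real.log r * Real.exp (-r ^ 2 / (2 * t)))
      atBot (nhds (∫ r in Ioi (0:ℝ), r * Real.log r * Real.exp (-r ^ 2 / (2 * t)))) := by
  have hint := InvBessel.integrableOn_h t ht
  have hsplit : ∀ x : ℝ,
      (∫ r in Ioi (Real.exp x), r * Real.log r * Real.exp (-r ^ 2 / (2 * t)))
        = (∫ r in Ioi (0:ℝ), r * Real.log r * Real.exp (-r ^ 2 / (2 * t)))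
          - ∫ r in Ioc (0:ℝ) (Real.exp x), r * Real.log r * Real.exp (-r ^ 2 / (2 * t)) := by
    intro x
    have ha := Real.exp_pos x
    have hu : Ioc (0:ℝ) (Real.exp x) ∪ Ioi (Real.exp x) = Ioi 0 := Ioc_union_Ioi_eq_Ioi ha.le
    have := setIntegral_union (Set.Ioc_disjoint_Ioi le_rfl) measurableSet_Ioi
      (hint.mono_set (by rw [← hu]; exact subset_union_left))
      (hint.mono_set (by rw [← hu]; exact subset_union_right))
      (f := fun r => r * Real.log r * Real.exp (-r ^ 2 / (2 * t))) (μ := volume)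
    rw [hu] at this
    linarith
  simp_rw [hsplit]
  have hzero : Tendsto (fun x : ℝ =>
      ∫ r in Ioc (0:ℝ) (Real.exp x), r * Real.log r * Real.exp (-r ^ 2 / (2 * t)))
      atBot (nhds 0) := by
    have hμ : Tendsto ((volume.restrict (Ioi (0:ℝ))) ∘ fun x : ℝ => Ioc (0:ℝ) (Real.exp x))
        atBot (nhds 0) := by
      have heq : ((volume.restrict (Ioi (0:ℝ))) ∘ fun x : ℝ => Ioc (0:ℝ) (Real.exp x))
          = fun x : ℝ => ENNReal.ofReal (Real.exp x) := by
        funext x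
        simp only [Function.comp_apply]
        rw [Measure.restrict_apply measurableSet_Ioc,
          show Ioc (0:ℝ) (Real.exp x) ∩ Ioi 0 = Ioc 0 (Real.exp x) from
            inter_eq_left.mpr Ioc_subset_Ioi_self]
        simp [Real.volume_Ioc]
      rw [heq]
      have h6 := ENNReal.tendsto_ofReal (Real.tendsto_exp_atBot)
      simpa using h6
    have key := hint.tendsto_setIntegral_nhds_zero hμ
    refine key.congr fun x => ?_
    rw [Measure.restrict_restrict measurableSet_Ioc,
      show Ioc (0:ℝ) (Real.exp x) ∩ Ioi 0 = Ioc 0 (Real.exp x) from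
        inter_eq_left.mpr Ioc_subset_Ioi_self]
  simpa using tendsto_const_nhds.sub hzero

lemma value_A (t : ℝ) (ht : 0 < t) :
    ∫ r in Ioi (0:ℝ), r * Real.log r * Real.exp (-r ^ 2 / (2 * t))
      = t / 2 * (Real.log (2 * t) - Real.eulerMascheroniConstant) := by
  have h2t : (0:ℝ) < 2 * t := by positivity
  set g : ℝ → ℝ := fun y => 1 / 2 * Real.log y * Real.exp (-y / (2 * t)) with hg
  -- step 1: rpow substitution
  have step1 : (∫ x in Ioi (0:ℝ), (2 * x ^ ((2:ℝ) - 1)) • g (x ^ (2:ℝ)))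
      = ∫ y in Ioi (0:ℝ), g y :=
    integral_comp_rpow_Ioi_of_pos two_pos
  have e1 : (∫ x in Ioi (0:ℝ), (2 * x ^ ((2:ℝ) - 1)) • g (x ^ (2:ℝ)))
      = ∫ x in Ioi (0:ℝ), 2 * (x * Real.log x * Real.exp (-x ^ 2 / (2 * t))) := by
    refine setIntegral_congr_fun measurableSet_Ioi fun x hx => ?_
    have hx : (0:ℝ) < x := hx
    have hp : x ^ ((2:ℝ) - 1) = x := by
      rw [show ((2:ℝ) - 1) = (1:ℝ) by norm_num, Real.rpow_one]
    have hp2 : x ^ ((2:ℝ)) = x ^ 2 := by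
      rw [show (2:ℝ) = ((2:ℕ):ℝ) by norm_num, Real.rpow_natCast]
    rw [smul_eq_mul, hg]
    simp only [hp, hp2]
    rw [show x ^ 2 = x * x by ring, Real.log_mul hx.ne' hx.ne']
    ring_nf
  -- step 2: scaling
  have step2 : (∫ u in Ioi (0:ℝ), g (2 * t * u)) = (2 * t)⁻¹ • ∫ y in Ioi (2 * t * 0), g y :=
    integral_comp_mul_left_Ioi g 0 h2t
  have e2 : (∫ u in Ioi (0:ℝ), g (2 * t * u))
      = ∫ u in Ioi (0:ℝ), (1 / 2 * Real.log (2 * t) * Real.exp (-u)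
          + 1 / 2 * (Real.log u * Real.exp (-u))) := by
    refine setIntegral_congr_fun measurableSet_Ioi fun u hu => ?_
    have hu : (0:ℝ) < u := hu
    rw [hg]
    simp only
    rw [Real.log_mul h2t.ne' hu.ne']
    have h5 : -(2 * t * u) / (2 * t) = -u := by field_simp
    rw [h5]
    ring
  have hexpint : IntegrableOn (fun u : ℝ => Real.exp (-u)) (Ioi (0:ℝ)) := by
    have := Real.GammaIntegral_convergent one_pos
    simpa using this
  have e3 : (∫ u in Ioi (0:ℝ), (1 / 2 * Real.log (2 * t) * Real.exp (-u)
          + 1 / 2 * (Real.log u * Real.exp (-u))))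
      = 1 / 2 * Real.log (2 * t) * 1 + 1 / 2 * (-Real.eulerMascheroniConstant) := by
    rw [integral_add ((hexpint.const_mul _)) (InvBessel.integrableOn_log_mul_exp_neg.const_mul _),
      integral_const_mul, integral_const_mul, integral_exp_neg_Ioi_zero,
      InvBessel.integral_log_mul_exp_neg]
  -- combine
  rw [e1, integral_const_mul] at step1
  rw [e2, e3, mul_zero] at step2
  -- step2 : 1/2 log(2t) + 1/2 (-γ) = (2t)⁻¹ • ∫ y in Ioi 0, g y
  rw [smul_eq_mul] at step2
  have hy : (∫ y in Ioi (0:ℝ), g y)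
      = 2 * t * (1 / 2 * Real.log (2 * t) * 1 + 1 / 2 * (-Real.eulerMascheroniConstant)) := by
    field_simp at step2 ⊢
    linarith
  rw [hy] at step1
  have h2 : (2:ℝ) ≠ 0 := two_ne_zero
  nlinarith [step1]

end InvBessel

open MeasureTheory Filter

/-- For each fixed `t > 0`,
`lim_{x → -∞} ( x + ∫_{e^x}^∞ (1/r) e^{-r²/(2t)} dr ) = (1/2)(log 2 + log t − γ)`,
where `γ` is the Euler–Mascheroni constant. -/
theorem invBessel2Dh_finite_limit_atBot (t : ℝ) (ht : 0 < t) :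
    Tendsto (fun x : ℝ =>
        x + ∫ r in Set.Ioi (Real.exp x), r⁻¹ * Real.exp (-r ^ 2 / (2 * t)))
      atBot
      (nhds ((1 / 2) * (Real.log 2 + Real.log t - Real.eulerMascheroniConstant))) := by
  have hrw : (fun x : ℝ =>
        x + ∫ r in Set.Ioi (Real.exp x), r⁻¹ * Real.exp (-r ^ 2 / (2 * t)))
      = fun x : ℝ =>
        t⁻¹ * (∫ r in Ioi (Real.exp x), r * Real.log r * Real.exp (-r ^ 2 / (2 * t)))
          + x * (1 - Real.exp (-(Real.exp x) ^ 2 / (2 * t))) := by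
    funext x
    rw [InvBessel.ibp t (Real.exp x) ht (Real.exp_pos x), Real.log_exp]
    ring
  rw [hrw]
  have h1 : Tendsto (fun x : ℝ =>
      t⁻¹ * (∫ r in Ioi (Real.exp x), r * Real.log r * Real.exp (-r ^ 2 / (2 * t))))
      atBot (nhds (t⁻¹ * (t / 2 * (Real.log (2 * t) - Real.eulerMascheroniConstant)))) := by
    have := (InvBessel.tendsto_tail t ht).const_mul t⁻¹
    rwa [InvBessel.value_A t ht] at this
  have h2 : Tendsto (fun x : ℝ => x * (1 - Real.exp (-(Real.exp x) ^ 2 / (2 * t))))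
      atBot (nhds 0) := by
    have hg : Tendsto (fun x : ℝ => ((-x) ^ 1 * Real.exp (-(-x))) * (2 * t)⁻¹)
        atBot (nhds (0 * (2 * t)⁻¹)) :=
      ((tendsto_pow_mul_exp_neg_atTop_nhds_zero 1).comp tendsto_neg_atBot_atTop).mul_const _
    rw [zero_mul] at hg
    refine squeeze_zero_norm' ?_ hg
    filter_upwards [eventually_le_atBot (0:ℝ)] with x hx
    have hex : (0:ℝ) < Real.exp x := Real.exp_pos x
    have hex1 : Real.exp x ≤ 1 := Real.exp_le_one_iff.mpr hx
    have h2t : (0:ℝ) < 2 * t := by positivity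
    set y : ℝ := (Real.exp x) ^ 2 / (2 * t) with hy
    have hy0 : 0 ≤ y := by positivity
    have hyle : 1 - Real.exp (-y) ≤ y := by
      have := Real.add_one_le_exp (-y)
      linarith
    have hy1 : 0 ≤ 1 - Real.exp (-y) := by
      have : Real.exp (-y) ≤ 1 := Real.exp_le_one_iff.mpr (by linarith)
      linarith
    have heq : -(Real.exp x) ^ 2 / (2 * t) = -y := by rw [hy]; ring
    rw [heq]
    rw [Real.norm_eq_abs, abs_mul, abs_of_nonneg hy1]
    have hax : |x| = -x := abs_of_nonpos hx
    have hb1 : |x| * (1 - Real.exp (-y)) ≤ (-x) * y := by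
      rw [hax]
      apply mul_le_mul_of_nonneg_left hyle (by linarith)
    have hb2 : (-x) * y ≤ ((-x) ^ 1 * Real.exp (-(-x))) * (2 * t)⁻¹ := by
      rw [hy, pow_one, neg_neg]
      have hsq : (Real.exp x) ^ 2 ≤ Real.exp x := by nlinarith
      have : (Real.exp x) ^ 2 / (2 * t) ≤ Real.exp x * (2 * t)⁻¹ := by
        rw [div_eq_mul_inv]
        exact mul_le_mul_of_nonneg_right hsq (by positivity)
      calc (-x) * ((Real.exp x) ^ 2 / (2 * t)) ≤ (-x) * (Real.exp x * (2 * t)⁻¹) :=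
            mul_le_mul_of_nonneg_left this (by linarith)
        _ = (-x) * Real.exp x * (2 * t)⁻¹ := by ring
    exact le_trans hb1 hb2
  have hsum := h1.add h2
  rw [add_zero] at hsum
  have hval : t⁻¹ * (t / 2 * (Real.log (2 * t) - Real.eulerMascheroniConstant))
      = (1 / 2) * (Real.log 2 + Real.log t - Real.eulerMascheroniConstant) := by
    rw [Real.log_mul two_ne_zero ht.ne']
    field_simp
  rwa [hval] at hsum
end

section
/- Let σ : ℝ → (0,∞) be continuous and u : ℝ → (0,∞) be C² with λu = (1/2)σ²u'' for λ > 0. Suppose s_u(∞) := ∫_0^∞ u(ξ)^{-2} dξ < ∞. Then u is unbounded; in fact lim_{ξ→∞} u(ξ) = ∞. -/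
open MeasureTheory Filter

/-- Let `σ : ℝ → (0,∞)` be continuous and `u : ℝ → (0,∞)` a `C²` solution of
`λu = (1/2)σ²u''` for `λ > 0`. If `s_u(∞) = ∫_0^∞ u(ξ)⁻² dξ < ∞`, then `u` is
unbounded; in fact `lim_{ξ→∞} u(ξ) = ∞`. -/
theorem finite_scale_limit_implies_unbounded
    (σ u : ℝ → ℝ) (hσc : Continuous σ) (hσpos : ∀ ξ, 0 < σ ξ)
    (hupos : ∀ ξ, 0 < u ξ) (hu : ContDiff ℝ 2 u)
    (lam : ℝ) (hlam : 0 < lam)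
    (hODE : ∀ ξ, lam * u ξ = (1 / 2) * (σ ξ) ^ 2 * iteratedDeriv 2 u ξ)
    (hfin : IntegrableOn (fun ξ => ((u ξ) ^ 2)⁻¹) (Set.Ioi 0) volume) :
    Tendsto u atTop atTop := by
  -- u is differentiable, deriv u is differentiable
  have h2 : ContDiff ℝ (1 + 1 : ℕ) u := by exact_mod_cast hu
  have hdiff : Differentiable ℝ u := hu.differentiable (by norm_num)
  have hd1 : ContDiff ℝ 1 (deriv u) := ((contDiff_succ_iff_deriv (n := 1)).mp (by exact_mod_cast hu)).2.2
  have hdiff' : Differentiable ℝ (deriv u) := hd1.differentiable (by norm_num)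
  -- second derivative is positive
  have hpos2 : ∀ ξ, 0 < iteratedDeriv 2 u ξ := by
    intro ξ
    have h := hODE ξ
    nlinarith [mul_pos hlam (hupos ξ), mul_pos (hσpos ξ) (hσpos ξ), sq_nonneg (σ ξ)]
  have hderiv2 : ∀ ξ, deriv (deriv u) ξ = iteratedDeriv 2 u ξ := by
    intro ξ
    rw [show (2 : ℕ) = 1 + 1 from rfl, iteratedDeriv_succ, iteratedDeriv_one]
  -- deriv u is strictly increasing
  have hmono : StrictMono (deriv u) := by
    apply strictMono_of_deriv_pos
    intro ξ
    rw [hderiv2 ξ]; exact hpos2 ξ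
  -- Claim: deriv u is positive somewhere
  by_cases hpos : ∃ ξ₀, 0 < deriv u ξ₀
  · obtain ⟨ξ₀, hξ₀⟩ := hpos
    have key : ∀ ξ, ξ₀ ≤ ξ → u ξ₀ + deriv u ξ₀ * (ξ - ξ₀) ≤ u ξ := by
      intro ξ hξ
      have := (convex_Ici ξ₀).mul_sub_le_image_sub_of_le_deriv
        (f := u) hdiff.continuous.continuousOn hdiff.differentiableOn
        (C := deriv u ξ₀) (fun x hx => by
          rw [interior_Ici] at hx
          exact (hmono (Set.mem_Ioi.mp hx)).le)
        ξ₀ Set.self_mem_Ici ξ hξ hξ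
      linarith
    refine tendsto_atTop_mono' atTop (eventually_atTop.mpr ⟨ξ₀, key⟩) ?_
    have : Tendsto (fun ξ => u ξ₀ + deriv u ξ₀ * (ξ - ξ₀)) atTop atTop := by
      apply tendsto_atTop_add_const_left
      exact (tendsto_atTop_add_const_right _ _ tendsto_id).const_mul_atTop hξ₀
    exact this
  · -- otherwise deriv u ≤ 0 everywhere, u antitone, contradiction with integrability
    exfalso
    push_neg at hpos
    have hanti : Antitone u := by
      apply antitone_of_deriv_nonpos hdiff
      exact hpos
    have hbound : ∀ ξ ∈ Set.Ioi (0:ℝ), ((u 0) ^ 2)⁻¹ ≤ ((u ξ) ^ 2)⁻¹ := by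
      intro ξ hξ
      have h1 : u ξ ≤ u 0 := hanti (le_of_lt hξ)
      have h2 : (0:ℝ) < u ξ := hupos ξ
      have : (u ξ) ^ 2 ≤ (u 0) ^ 2 := by nlinarith
      exact inv_anti₀ (by positivity) this
    have hcint : IntegrableOn (fun _ : ℝ => ((u 0) ^ 2)⁻¹) (Set.Ioi 0) volume := by
      apply hfin.mono' aestronglyMeasurable_const
      filter_upwards [ae_restrict_mem measurableSet_Ioi] with ξ hξ
      rw [Real.norm_eq_abs, abs_of_pos (inv_pos.mpr (pow_pos (hupos 0) 2))]
      exact hbound ξ hξ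
    rw [integrableOn_const_iff] at hcint
    rcases hcint with h | h
    · have := hupos 0; simp at h; nlinarith [hupos 0]
    · rw [Real.volume_Ioi] at h; exact (lt_irrefl _ h).elim
end
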